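/- Fix α ≥ 1 and let K(x,s) = G(x,s) s^{α} where G is the Lane-Emden Green's function on (0,1]². Define the linear operator (Sφ)(x) = ∫₀¹ K(x,s) φ(s) ds on C([0,1]). Then S maps C([0,1]) into C([0,1]) and is a bounded linear operator with operator norm ‖S‖ ≤ m where m = sup_{x∈(0,1]} ∫₀¹ |K(x,s)| ds < ∞. -/

import Mathlib

open Set Real intervalIntegral MeasureTheory

/-- The Lane-Emden Green's function for shape factor `α ≥ 1`. -/
noncomputable def laneEmdenGreen (α x s : ℝ) : ℝ :=
  if α = 1 then Real.log (max x s) else ((max x s) ^ (1 - α) - 1) / (1 - α)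

private lemma slog {s : ℝ} (hs0 : 0 < s) : s * (-Real.log s) ≤ 1 - s := by
  have h := Real.log_le_sub_one_of_pos (show (0:ℝ) < 1/s by positivity)
  rw [one_div, Real.log_inv] at h
  have h2 : s * (-Real.log s) ≤ s * (s⁻¹ - 1) := mul_le_mul_of_nonneg_left h hs0.le
  have h3 : s * (s⁻¹ - 1) = 1 - s := by field_simp
  linarith

private lemma abs_K_le {α : ℝ} (hα : 1 ≤ α) {x s : ℝ} (hx1 : x ≤ 1)
    (hs0 : 0 ≤ s) (hs1 : s ≤ 1) : |laneEmdenGreen α x s * s ^ α| ≤ 1 := by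
  rcases eq_or_lt_of_le hs0 with h | hs
  · rw [← h, Real.zero_rpow (by linarith : α ≠ 0), mul_zero, abs_zero]; norm_num
  · set t := max x s with ht
    have hst : s ≤ t := le_max_right x s
    have ht0 : 0 < t := lt_of_lt_of_le hs hst
    have ht1 : t ≤ 1 := max_le hx1 hs1
    have hlog : -Real.log t ≤ -Real.log s := by
      have := Real.log_le_log hs hst
      linarith
    have hls : 0 ≤ -Real.log s := by
      have := Real.log_nonpos hs0 hs1; linarith
    have hlt0 : Real.log t ≤ 0 := Real.log_nonpos ht0.le ht1
    have hspow : 0 < s ^ α := Real.rpow_pos_of_pos hs α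
    have hsl := slog hs
    by_cases h1 : α = 1
    · subst h1
      rw [laneEmdenGreen, if_pos rfl, Real.rpow_one, abs_mul, abs_of_pos hs, abs_of_nonpos hlt0]
      nlinarith
    · have hα1 : 1 < α := lt_of_le_of_ne hα (Ne.symm h1)
      rw [laneEmdenGreen, if_neg h1]
      have htp : (1:ℝ) ≤ t ^ (1 - α) := by
        have := Real.rpow_le_rpow_of_exponent_ge ht0 ht1 (by linarith : 1 - α ≤ (0:ℝ))
        rwa [Real.rpow_zero] at this
      have hstp : t ^ (1 - α) ≤ s ^ (1 - α) :=
        Real.rpow_le_rpow_of_nonpos hs hst (by linarith)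
      have hmul : s ^ (1 - α) * s ^ α = s := by
        rw [← Real.rpow_add hs]; norm_num
      have hsplit : s ^ α = s * s ^ (α - 1) := by
        have : s ^ α = s ^ (1 + (α - 1)) := by ring_nf
        rw [this, Real.rpow_add hs, Real.rpow_one]
      have hexp : s ^ (α - 1) = Real.exp (Real.log s * (α - 1)) :=
        Real.rpow_def_of_pos hs _
      have hexpin := Real.add_one_le_exp (Real.log s * (α - 1))
      have key : s - s ^ α ≤ (α - 1) * (1 - s) := by
        have h4 : 1 - s ^ (α - 1) ≤ (α - 1) * (-Real.log s) := by
          rw [hexp]; nlinarith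
        nlinarith [mul_le_mul_of_nonneg_left h4 hs.le,
          mul_le_mul_of_nonneg_left hsl (by linarith : (0:ℝ) ≤ α - 1)]
      have habs : |(t ^ (1 - α) - 1) / (1 - α)| = (t ^ (1 - α) - 1) / (α - 1) := by
        rw [abs_div, abs_of_nonneg (by linarith), abs_of_neg (by linarith : 1 - α < 0), neg_sub]
      rw [abs_mul, habs, abs_of_pos hspow]
      have step1 : (t ^ (1 - α) - 1) / (α - 1) * s ^ α ≤ (s ^ (1 - α) - 1) / (α - 1) * s ^ α := by
        apply mul_le_mul_of_nonneg_right _ hspow.le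
        apply div_le_div_of_nonneg_right _ (by linarith)
        · linarith
      have step2 : (s ^ (1 - α) - 1) / (α - 1) * s ^ α = (s - s ^ α) / (α - 1) := by
        rw [div_mul_eq_mul_div, sub_mul, hmul, one_mul]
      have step3 : (s - s ^ α) / (α - 1) ≤ 1 := by
        rw [div_le_one (by linarith)]
        nlinarith
      linarith [step1, step2.le, step2.ge, step3]

private lemma cont_K (α : ℝ) {s : ℝ} (hs : 0 < s) :
    Continuous fun x : ℝ => laneEmdenGreen α x s := by
  have hmax : Continuous fun x : ℝ => max x s := continuous_id.max continuous_const
  have hne : ∀ x : ℝ, max x s ≠ 0 := fun x => (lt_of_lt_of_le hs (le_max_right x s)).ne'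
  unfold laneEmdenGreen
  rcases eq_or_ne α 1 with h | h
  · subst h; simp only [if_pos rfl, ite_true]
    exact hmax.log hne
  · simp only [if_neg h]
    exact ((hmax.rpow_const fun x => Or.inl (hne x)).sub continuous_const).div_const _

private lemma contAt_K {α : ℝ} (hα : 1 ≤ α) (x : ℝ) {s : ℝ} (hs : 0 < s) :
    ContinuousAt (fun s : ℝ => laneEmdenGreen α x s * s ^ α) s := by
  have hmax : ContinuousAt (fun s : ℝ => max x s) s :=
    (continuous_const.max continuous_id).continuousAt
  have hne : max x s ≠ 0 := (lt_of_lt_of_le hs (le_max_right x s)).ne'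
  have hpow : ContinuousAt (fun s : ℝ => s ^ α) s :=
    (Real.continuous_rpow_const (by linarith)).continuousAt
  apply ContinuousAt.mul _ hpow
  unfold laneEmdenGreen
  rcases eq_or_ne α 1 with h | h
  · subst h; simp only [if_pos rfl, ite_true]
    exact (Real.continuousAt_log hne).comp hmax
  · simp only [if_neg h]
    exact (((Real.continuousAt_rpow_const _ _ (Or.inl hne)).comp hmax).sub
      continuousAt_const).div_const _

private lemma contOn_Kφ {α : ℝ} (hα : 1 ≤ α) (x : ℝ) (φ : C(Icc (0:ℝ) 1, ℝ)) :
    ContinuousOn (fun s : ℝ => laneEmdenGreen α x s * s ^ α *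
      φ (projIcc 0 1 (by norm_num) s)) (Ioc (0:ℝ) 1) := by
  intro s hs
  exact ((contAt_K hα x hs.1).mul
    ((φ.continuous.comp continuous_projIcc).continuousAt)).continuousWithinAt

private lemma norm_Kφ_le {α : ℝ} (hα : 1 ≤ α) {x : ℝ} (hx1 : x ≤ 1)
    (φ : C(Icc (0:ℝ) 1, ℝ)) {s : ℝ} (hs : s ∈ Ioc (0:ℝ) 1) :
    ‖laneEmdenGreen α x s * s ^ α * φ (projIcc 0 1 (by norm_num) s)‖ ≤ ‖φ‖ := by
  rw [Real.norm_eq_abs, abs_mul]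
  calc |laneEmdenGreen α x s * s ^ α| * |φ (projIcc 0 1 (by norm_num) s)| ≤ 1 * ‖φ‖ := by
        apply mul_le_mul (abs_K_le hα hx1 hs.1.le hs.2) _ (abs_nonneg _) zero_le_one
        rw [← Real.norm_eq_abs]; exact φ.norm_coe_le_norm _
    _ = ‖φ‖ := one_mul _

private lemma intOn_Kφ {α : ℝ} (hα : 1 ≤ α) {x : ℝ} (hx1 : x ≤ 1) (φ : C(Icc (0:ℝ) 1, ℝ)) :
    IntegrableOn (fun s : ℝ => laneEmdenGreen α x s * s ^ α *
      φ (projIcc 0 1 (by norm_num) s)) (Ioc (0:ℝ) 1) volume := by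
  apply Integrable.mono' (g := fun _ => ‖φ‖)
    (integrableOn_const measure_Ioc_lt_top.ne)
    ((contOn_Kφ hα x φ).aestronglyMeasurable measurableSet_Ioc)
  exact (ae_restrict_iff' measurableSet_Ioc).2
    (Filter.Eventually.of_forall fun s hs => norm_Kφ_le hα hx1 φ hs)

private lemma iint_Kφ {α : ℝ} (hα : 1 ≤ α) {x : ℝ} (hx1 : x ≤ 1) (φ : C(Icc (0:ℝ) 1, ℝ)) :
    IntervalIntegrable (fun s : ℝ => laneEmdenGreen α x s * s ^ α *
      φ (projIcc 0 1 (by norm_num) s)) volume 0 1 := by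
  rw [intervalIntegrable_iff, uIoc_of_le zero_le_one]
  exact intOn_Kφ hα hx1 φ

private lemma iint_K {α : ℝ} (hα : 1 ≤ α) {x : ℝ} (hx1 : x ≤ 1) :
    IntervalIntegrable (fun s : ℝ => laneEmdenGreen α x s * s ^ α) volume 0 1 := by
  have := iint_Kφ hα hx1 (ContinuousMap.const _ (1:ℝ))
  simpa using this

private lemma int_absK_le {α : ℝ} (hα : 1 ≤ α) {x : ℝ} (hx1 : x ≤ 1) :
    (∫ s in (0:ℝ)..1, |laneEmdenGreen α x s * s ^ α|) ≤ 1 := by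
  calc (∫ s in (0:ℝ)..1, |laneEmdenGreen α x s * s ^ α|)
      ≤ ∫ _ in (0:ℝ)..1, (1:ℝ) :=
        intervalIntegral.integral_mono_on zero_le_one (iint_K hα hx1).abs
          intervalIntegrable_const (fun s hs => abs_K_le hα hx1 hs.1 hs.2)
    _ = 1 := by simp

private lemma cont_T {α : ℝ} (hα : 1 ≤ α) (φ : C(Icc (0:ℝ) 1, ℝ)) :
    Continuous fun x : Icc (0:ℝ) 1 => ∫ s in (0:ℝ)..1,
      laneEmdenGreen α (x:ℝ) s * s ^ α * φ (projIcc 0 1 (by norm_num) s) := by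
  have heq : ∀ x : Icc (0:ℝ) 1, (∫ s in (0:ℝ)..1,
      laneEmdenGreen α (x:ℝ) s * s ^ α * φ (projIcc 0 1 (by norm_num) s)) =
      ∫ s in Ioc (0:ℝ) 1,
        laneEmdenGreen α (x:ℝ) s * s ^ α * φ (projIcc 0 1 (by norm_num) s) :=
    fun x => intervalIntegral.integral_of_le zero_le_one
  simp_rw [heq]
  apply continuous_of_dominated (bound := fun _ => ‖φ‖)
  · exact fun x => (contOn_Kφ hα _ φ).aestronglyMeasurable measurableSet_Ioc
  · exact fun x => (ae_restrict_iff' measurableSet_Ioc).2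
      (Filter.Eventually.of_forall fun s hs => norm_Kφ_le hα x.2.2 φ hs)
  · exact integrableOn_const measure_Ioc_lt_top.ne
  · refine (ae_restrict_iff' measurableSet_Ioc).2
      (Filter.Eventually.of_forall fun s hs => ?_)
    exact (((cont_K α hs.1).comp continuous_subtype_val).mul continuous_const).mul
      continuous_const

theorem stmt19 (α : ℝ) (hα : 1 ≤ α) (m : ℝ)
    (hm : m = sSup ((fun x : ℝ =>
      ∫ s in (0:ℝ)..1, |laneEmdenGreen α x s * s ^ α|) '' Ioc (0:ℝ) 1)) :
    BddAbove ((fun x : ℝ =>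
      ∫ s in (0:ℝ)..1, |laneEmdenGreen α x s * s ^ α|) '' Ioc (0:ℝ) 1) ∧
    ∃ S : C(Icc (0:ℝ) 1, ℝ) →L[ℝ] C(Icc (0:ℝ) 1, ℝ),
      (∀ φ : C(Icc (0:ℝ) 1, ℝ), ∀ x : Icc (0:ℝ) 1,
        (S φ) x = ∫ s in (0:ℝ)..1,
          laneEmdenGreen α (x : ℝ) s * s ^ α * φ (projIcc 0 1 (by norm_num) s)) ∧
      ‖S‖ ≤ m := by
  have hbdd : BddAbove ((fun x : ℝ =>
      ∫ s in (0:ℝ)..1, |laneEmdenGreen α x s * s ^ α|) '' Ioc (0:ℝ) 1) := by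
    refine ⟨1, ?_⟩
    rintro v ⟨x, hx, rfl⟩
    exact int_absK_le hα hx.2
  have hm0 : 0 ≤ m := by
    have h0le : 0 ≤ ∫ s in (0:ℝ)..1, |laneEmdenGreen α 1 s * s ^ α| :=
      intervalIntegral.integral_nonneg zero_le_one fun u _ => abs_nonneg _
    exact hm ▸ le_trans h0le (le_csSup hbdd ⟨1, by norm_num, rfl⟩)
  -- the integral bound holds also at x = 0
  have hxm : ∀ x : ℝ, 0 ≤ x → x ≤ 1 →
      (∫ s in (0:ℝ)..1, |laneEmdenGreen α x s * s ^ α|) ≤ m := by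
    intro x hx0 hx1
    rcases eq_or_lt_of_le hx0 with h | hx
    swap
    · exact hm ▸ le_csSup hbdd ⟨x, ⟨hx, hx1⟩, rfl⟩
    subst h
    refine le_of_forall_pos_le_add fun ε hε => ?_
    set y := min ε 1 with hy
    have hy0 : 0 < y := lt_min hε one_pos
    have hy1 : y ≤ 1 := min_le_right _ _
    have hy' : y ∈ uIcc (0:ℝ) 1 := by rw [uIcc_of_le zero_le_one]; exact ⟨hy0.le, hy1⟩
    have h0 : IntervalIntegrable (fun s => |laneEmdenGreen α 0 s * s ^ α|) volume 0 1 :=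
      (iint_K hα zero_le_one).abs
    have h0a := h0.mono_set (uIcc_subset_uIcc left_mem_uIcc hy')
    have h0b := h0.mono_set (uIcc_subset_uIcc hy' right_mem_uIcc)
    have hsplit := intervalIntegral.integral_add_adjacent_intervals h0a h0b
    have ha : (∫ s in (0:ℝ)..y, |laneEmdenGreen α 0 s * s ^ α|) ≤ y := by
      calc (∫ s in (0:ℝ)..y, |laneEmdenGreen α 0 s * s ^ α|)
          ≤ ∫ _ in (0:ℝ)..y, (1:ℝ) :=
            intervalIntegral.integral_mono_on hy0.le h0a intervalIntegrable_const
              fun s hs => abs_K_le hα zero_le_one hs.1 (le_trans hs.2 hy1)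
        _ = y := by simp
    have hb : (∫ s in y..1, |laneEmdenGreen α 0 s * s ^ α|)
        = ∫ s in y..1, |laneEmdenGreen α y s * s ^ α| := by
      apply intervalIntegral.integral_congr
      intro s hs
      rw [uIcc_of_le hy1] at hs
      have h1 : max (0:ℝ) s = max y s := by
        rw [max_eq_right (le_trans hy0.le hs.1), max_eq_right hs.1]
      simp only [laneEmdenGreen, h1]
    have hyK : IntervalIntegrable (fun s => |laneEmdenGreen α y s * s ^ α|) volume 0 1 :=
      (iint_K hα hy1).abs
    have hc : (∫ s in y..1, |laneEmdenGreen α y s * s ^ α|)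
        ≤ ∫ s in (0:ℝ)..1, |laneEmdenGreen α y s * s ^ α| := by
      have hsplit2 := intervalIntegral.integral_add_adjacent_intervals
        (hyK.mono_set (uIcc_subset_uIcc left_mem_uIcc hy'))
        (hyK.mono_set (uIcc_subset_uIcc hy' right_mem_uIcc))
      have hnn : 0 ≤ ∫ s in (0:ℝ)..y, |laneEmdenGreen α y s * s ^ α| :=
        intervalIntegral.integral_nonneg hy0.le fun u _ => abs_nonneg _
      linarith
    have hd : (∫ s in (0:ℝ)..1, |laneEmdenGreen α y s * s ^ α|) ≤ m :=
      hm ▸ le_csSup hbdd ⟨y, ⟨hy0, hy1⟩, rfl⟩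
    have hyε : y ≤ ε := min_le_left _ _
    linarith
  refine ⟨hbdd, ?_⟩
  let T : C(Icc (0:ℝ) 1, ℝ) →ₗ[ℝ] C(Icc (0:ℝ) 1, ℝ) :=
    { toFun := fun φ => ContinuousMap.mk (fun x => ∫ s in (0:ℝ)..1,
        laneEmdenGreen α (x:ℝ) s * s ^ α * φ (projIcc 0 1 (by norm_num) s)) (cont_T hα φ)
      map_add' := by
        intro φ ψ
        ext x
        simp only [ContinuousMap.coe_mk, ContinuousMap.add_apply, mul_add]
        exact intervalIntegral.integral_add (iint_Kφ hα x.2.2 φ) (iint_Kφ hα x.2.2 ψ)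
      map_smul' := by
        intro c φ
        ext x
        simp only [ContinuousMap.coe_mk, ContinuousMap.smul_apply, smul_eq_mul,
          RingHom.id_apply]
        rw [← intervalIntegral.integral_const_mul]
        congr 1
        funext s
        ring }
  have hb : ∀ φ : C(Icc (0:ℝ) 1, ℝ), ‖T φ‖ ≤ m * ‖φ‖ := by
    intro φ
    rw [ContinuousMap.norm_le _ (by positivity)]
    intro x
    rw [Real.norm_eq_abs]
    show |∫ s in (0:ℝ)..1,
      laneEmdenGreen α (x:ℝ) s * s ^ α * φ (projIcc 0 1 (by norm_num) s)| ≤ m * ‖φ‖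
    calc |∫ s in (0:ℝ)..1,
        laneEmdenGreen α (x:ℝ) s * s ^ α * φ (projIcc 0 1 (by norm_num) s)|
        ≤ ∫ s in (0:ℝ)..1,
            |laneEmdenGreen α (x:ℝ) s * s ^ α * φ (projIcc 0 1 (by norm_num) s)| :=
          intervalIntegral.abs_integral_le_integral_abs zero_le_one
      _ ≤ ∫ s in (0:ℝ)..1, |laneEmdenGreen α (x:ℝ) s * s ^ α| * ‖φ‖ := by
          apply intervalIntegral.integral_mono_on zero_le_one (iint_Kφ hα x.2.2 φ).abs
            ((iint_K hα x.2.2).abs.mul_const _)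
          intro s hs
          rw [abs_mul]
          apply mul_le_mul_of_nonneg_left _ (abs_nonneg _)
          rw [← Real.norm_eq_abs]
          exact φ.norm_coe_le_norm _
      _ = (∫ s in (0:ℝ)..1, |laneEmdenGreen α (x:ℝ) s * s ^ α|) * ‖φ‖ :=
          intervalIntegral.integral_mul_const _ _
      _ ≤ m * ‖φ‖ := mul_le_mul_of_nonneg_right (hxm x x.2.1 x.2.2) (norm_nonneg _)
  exact ⟨T.mkContinuous m hb, fun φ x => rfl, LinearMap.mkContinuous_norm_le T hm0 hb⟩
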